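/- Let m > 0, 𝐩 = (p₁,p₂,p₃) ∈ ℝ³, p₄ = √(‖𝐩‖² + m²), p = (p₁,p₂,p₃,p₄), and s ∈ {0,1}. Let c^k_{n,j} ∈ ℂ be coupling constants and w(−p,·) a discrete plane wave for −p. Define the spinor ψ^{(−)}_{−p,−s}(x_{n,j}) = v(𝐩,s) w(−p, x_{n,j}) ∈ ℂ⁴, where v(𝐩,s) = ((𝛔·𝐩)/(p₄+m)(−iσ₂|s⟩), −iσ₂|s⟩) in 2+2 block form. Then ψ^{(−)}_{−p,−s} satisfies the discrete free Dirac equation: (i γ·∇ − m) ψ^{(−)}_{−p,−s}(x_{n,j}) = 0 for all n, j. -/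

import Mathlib

namespace CCausetGrowth

open Matrix

/-- The Pauli matrix σ₁. -/
def σ1 : Matrix (Fin 2) (Fin 2) ℂ := !![0, 1; 1, 0]

/-- The Pauli matrix σ₂. -/
def σ2 : Matrix (Fin 2) (Fin 2) ℂ := !![0, -Complex.I; Complex.I, 0]

/-- The Pauli matrix σ₃. -/
def σ3 : Matrix (Fin 2) (Fin 2) ℂ := !![1, 0; 0, -1]

/-- The gamma matrix `γ₁ = [[0, −σ₁], [σ₁, 0]]` in 2+2 block form. -/
def γ1 : Matrix (Fin 4) (Fin 4) ℂ :=
  !![0, 0, 0, -1; 0, 0, -1, 0; 0, 1, 0, 0; 1, 0, 0, 0]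

/-- The gamma matrix `γ₂ = [[0, −σ₂], [σ₂, 0]]` in 2+2 block form. -/
def γ2 : Matrix (Fin 4) (Fin 4) ℂ :=
  !![0, 0, 0, Complex.I; 0, 0, -Complex.I, 0; 0, -Complex.I, 0, 0; Complex.I, 0, 0, 0]

/-- The gamma matrix `γ₃ = [[0, −σ₃], [σ₃, 0]]` in 2+2 block form. -/
def γ3 : Matrix (Fin 4) (Fin 4) ℂ :=
  !![0, 0, -1, 0; 0, 0, 0, 1; 1, 0, 0, 0; 0, -1, 0, 0]

/-- The gamma matrix `γ₄ = [[σ₄, 0], [0, −σ₄]]` in 2+2 block form. -/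
def γ4 : Matrix (Fin 4) (Fin 4) ℂ :=
  !![1, 0, 0, 0; 0, 1, 0, 0; 0, 0, -1, 0; 0, 0, 0, -1]

/-- The qubits `|0⟩ = (1,0)` and `|1⟩ = (0,1)` in `ℂ²`. -/
def ket (s : Fin 2) : Fin 2 → ℂ := fun i => if i = s then 1 else 0

/-- For `𝐩 ∈ ℝ³`, the matrix `𝛔·𝐩 = p₁σ₁ + p₂σ₂ + p₃σ₃`. -/
noncomputable def sigma3Dot (pv : Fin 3 → ℝ) : Matrix (Fin 2) (Fin 2) ℂ :=
  (pv 0 : ℂ) • σ1 + (pv 1 : ℂ) • σ2 + (pv 2 : ℂ) • σ3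

/-- The covariant difference operator in direction `k` (for `k : Fin 4`, representing
direction `k+1`), acting componentwise on `ℂ⁴`-valued functions (spinors) of the
vertices: `∇_k f(x_{n,j}) = f(x_{n+2,4j+k}) − c^k_{n+2,4j+k} · f(x_{n,j})`, where
`c k N J` is the coupling constant `c^{k+1}_{N,J}`. -/
noncomputable def nablaS (c : Fin 4 → ℕ → ℕ → ℂ) (k : Fin 4)
    (f : ℕ → ℕ → Fin 4 → ℂ) (n j : ℕ) : Fin 4 → ℂ :=
  f (n + 2) (4 * j + (k : ℕ)) - c k (n + 2) (4 * j + (k : ℕ)) • f n j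

/-- `w` is a discrete plane wave in direction `q = (q₁,q₂,q₃,q₄)`:
`w(x_{n+2,4j+k−1}) = (c^k_{n+2,4j+k−1} + i·q_k)·w(x_{n,j})` for `k = 1,2,3` and
`w(x_{n+2,4j+3}) = (c^4_{n+2,4j+3} − i·q₄)·w(x_{n,j})`, at every vertex `x_{n,j}`. -/
def IsPlaneWave (c : Fin 4 → ℕ → ℕ → ℂ) (q : Fin 4 → ℝ) (w : ℕ → ℕ → ℂ) : Prop :=
  ∀ n j : ℕ, 1 ≤ n → j < 2 ^ (n - 1) → ∀ k : Fin 4,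
    w (n + 2) (4 * j + (k : ℕ)) =
      (c k (n + 2) (4 * j + (k : ℕ)) +
        (if (k : ℕ) = 3 then -1 else 1) * Complex.I * (q k : ℂ)) * w n j

/-- The discrete free Dirac operator `i γ·∇ = −iγ₁∇₁ − iγ₂∇₂ − iγ₃∇₃ + iγ₄∇₄` applied to
a spinor-valued function `ψ` at the vertex `x_{n,j}`. -/
noncomputable def diracOp (c : Fin 4 → ℕ → ℕ → ℂ) (ψ : ℕ → ℕ → Fin 4 → ℂ)
    (n j : ℕ) : Fin 4 → ℂ :=
  (-Complex.I) • γ1.mulVec (nablaS c 0 ψ n j) + (-Complex.I) • γ2.mulVec (nablaS c 1 ψ n j)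
    + (-Complex.I) • γ3.mulVec (nablaS c 2 ψ n j) + Complex.I • γ4.mulVec (nablaS c 3 ψ n j)

/-- let `m > 0`, `𝐩 ∈ ℝ³`, `p₄ = √(‖𝐩‖² + m²)`, `p = (𝐩, p₄)`, and let
`w(−p,·)` be a discrete plane wave for `−p`.  For `s ∈ {0,1}`, the spinor
`ψ⁻_{−p,−s}(x_{n,j}) = v(𝐩,s)·w(−p,x_{n,j})`, with
`v(𝐩,s) = ((𝛔·𝐩)/(p₄+m)(−iσ₂|s⟩), −iσ₂|s⟩)` in 2+2 block form, satisfies the discrete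
free Dirac equation `(i γ·∇ − m) ψ⁻_{−p,−s}(x_{n,j}) = 0`. -/
theorem discrete_dirac_equation_neg (m : ℝ) (hm : 0 < m) (pv : Fin 3 → ℝ) (p4 : ℝ)
    (hp4 : p4 = Real.sqrt ((pv 0) ^ 2 + (pv 1) ^ 2 + (pv 2) ^ 2 + m ^ 2))
    (c : Fin 4 → ℕ → ℕ → ℂ) (w : ℕ → ℕ → ℂ)
    (hw : IsPlaneWave c ![-(pv 0), -(pv 1), -(pv 2), -p4] w)
    (s : Fin 2) (v : Fin 4 → ℂ)
    (hv : v = ![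
      (((p4 + m : ℝ) : ℂ)⁻¹ • (sigma3Dot pv).mulVec ((-Complex.I) • σ2.mulVec (ket s))) 0,
      (((p4 + m : ℝ) : ℂ)⁻¹ • (sigma3Dot pv).mulVec ((-Complex.I) • σ2.mulVec (ket s))) 1,
      ((-Complex.I) • σ2.mulVec (ket s)) 0,
      ((-Complex.I) • σ2.mulVec (ket s)) 1])
    (ψ : ℕ → ℕ → Fin 4 → ℂ) (hψ : ∀ n j : ℕ, ψ n j = w n j • v) :
    ∀ n j : ℕ, 1 ≤ n → j < 2 ^ (n - 1) →
      diracOp c ψ n j - (m : ℂ) • ψ n j = 0 := by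
  intro n j hn hj
  have h0 := hw n j hn hj 0
  have h1 := hw n j hn hj 1
  have h2 := hw n j hn hj 2
  have h3 := hw n j hn hj 3
  simp only [Matrix.cons_val_zero, Matrix.cons_val_one, Matrix.head_cons,
    Matrix.cons_val_two, Matrix.tail_cons, Matrix.cons_val_three, Fin.isValue,
    Fin.val_zero, Fin.val_one, Fin.val_two, show ((3 : Fin 4) : ℕ) = 3 from rfl,
    if_true, if_false, Complex.ofReal_neg, Nat.add_zero, reduceIte] at h0 h1 h2 h3
  norm_num at h0 h1 h2 h3
  have hp4nn : 0 ≤ p4 := hp4 ▸ Real.sqrt_nonneg _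
  have hp4sq : p4 ^ 2 = pv 0 ^ 2 + pv 1 ^ 2 + pv 2 ^ 2 + m ^ 2 := by
    rw [hp4]; exact Real.sq_sqrt (by positivity)
  have hp4sqC : (p4 : ℂ) ^ 2 = (pv 0 : ℂ) ^ 2 + (pv 1 : ℂ) ^ 2 + (pv 2 : ℂ) ^ 2 + (m : ℂ) ^ 2 := by
    exact_mod_cast congrArg (fun x : ℝ => (x : ℂ)) hp4sq
  have hne : ((p4 : ℂ) + (m : ℂ)) ≠ 0 := by
    have h : (0:ℝ) < p4 + m := by linarith
    have := Complex.ofReal_ne_zero.mpr h.ne'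
    push_cast at this
    exact this
  obtain ⟨a, ha⟩ : ∃ a : ℂ, ((-Complex.I) • σ2.mulVec (ket s)) 0 = a := ⟨_, rfl⟩
  obtain ⟨b, hb⟩ : ∃ b : ℂ, ((-Complex.I) • σ2.mulVec (ket s)) 1 = b := ⟨_, rfl⟩
  have hab : ((-Complex.I) • σ2.mulVec (ket s)) = ![a, b] := by
    funext i; fin_cases i
    · exact ha
    · exact hb
  have hv0 : v 0 = ((p4:ℂ) + m)⁻¹ * ((pv 2 : ℂ) * a + ((pv 0 : ℂ) - Complex.I * (pv 1 : ℂ)) * b) := by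
    rw [hv]
    simp only [Matrix.cons_val_zero]
    rw [hab]
    simp [sigma3Dot, σ1, σ2, σ3, Matrix.mulVec, dotProduct, Fin.sum_univ_two]
    ring_nf
    tauto
  have hv1 : v 1 = ((p4:ℂ) + m)⁻¹ * (((pv 0 : ℂ) + Complex.I * (pv 1 : ℂ)) * a - (pv 2 : ℂ) * b) := by
    rw [hv]
    simp only [Matrix.cons_val_one, Matrix.head_cons]
    rw [hab]
    simp [sigma3Dot, σ1, σ2, σ3, Matrix.mulVec, dotProduct, Fin.sum_univ_two]
    ring_nf
    tauto
  have hv2 : v 2 = a := by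
    rw [hv]
    simp only [Matrix.cons_val_two, Matrix.tail_cons, Matrix.head_cons, ha]
  have hv3 : v 3 = b := by
    rw [hv]
    simp only [Matrix.cons_val_three, Matrix.tail_cons, Matrix.head_cons, hb]
  have hI3 : Complex.I ^ 3 = -Complex.I := by
    rw [pow_succ, Complex.I_sq]; ring
  have hI4 : Complex.I ^ 4 = 1 := by
    rw [show (4:ℕ) = 2*2 from rfl, pow_mul, Complex.I_sq]; ring
  have hv' : v = ![((p4:ℂ) + m)⁻¹ * ((pv 2 : ℂ) * a + ((pv 0 : ℂ) - Complex.I * (pv 1 : ℂ)) * b),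
      ((p4:ℂ) + m)⁻¹ * (((pv 0 : ℂ) + Complex.I * (pv 1 : ℂ)) * a - (pv 2 : ℂ) * b), a, b] := by
    funext i
    fin_cases i
    · exact hv0
    · exact hv1
    · exact hv2
    · exact hv3
  clear hv ha hb hw
  have e0 : nablaS c 0 ψ n j = (-Complex.I * (pv 0 : ℂ)) • (w n j • v) := by
    funext i
    simp only [nablaS, hψ, h0, Fin.isValue, Fin.val_zero, Nat.add_zero, Pi.sub_apply,
      Pi.smul_apply, smul_eq_mul]
    ring
  have e1 : nablaS c 1 ψ n j = (-Complex.I * (pv 1 : ℂ)) • (w n j • v) := by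
    funext i
    simp only [nablaS, hψ, h1, Fin.isValue, Fin.val_one, Pi.sub_apply,
      Pi.smul_apply, smul_eq_mul]
    ring
  have e2 : nablaS c 2 ψ n j = (-Complex.I * (pv 2 : ℂ)) • (w n j • v) := by
    funext i
    simp only [nablaS, hψ, h2, Fin.isValue, Fin.val_two, Pi.sub_apply,
      Pi.smul_apply, smul_eq_mul]
    ring
  have e3 : nablaS c 3 ψ n j = (Complex.I * (p4 : ℂ)) • (w n j • v) := by
    funext i
    simp only [nablaS, hψ, h3, Fin.isValue, show ((3 : Fin 4) : ℕ) = 3 from rfl,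
      Pi.sub_apply, Pi.smul_apply, smul_eq_mul]
    ring
  funext i
  fin_cases i <;>
  · simp only [diracOp, e0, e1, e2, e3, hψ, Matrix.mulVec_smul, γ1, γ2, γ3, γ4,
      Matrix.mulVec, dotProduct, Fin.sum_univ_four, Pi.add_apply, Pi.sub_apply,
      Pi.smul_apply, Pi.zero_apply, smul_eq_mul, Matrix.cons_val', Matrix.cons_val_zero,
      Matrix.cons_val_one, Matrix.head_cons, Matrix.cons_val_two, Matrix.tail_cons,
      Matrix.cons_val_three, Matrix.empty_val', Matrix.cons_val_fin_one,
      Matrix.of_apply, Fin.isValue, hv', Fin.reduceFinMk, Matrix.cons_val, Matrix.vecHead]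
    field_simp
    ring_nf
    try simp only [Complex.I_sq, hI3, hI4]
    first
      | linear_combination (w n j * a) * hp4sqC
      | linear_combination (w n j * b) * hp4sqC
      | linear_combination (-(w n j * a)) * hp4sqC
      | linear_combination (-(w n j * b)) * hp4sqC
      | linear_combination (0 : ℂ) * hp4sqC

end CCausetGrowth
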